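/- Let ω be a primitive q-th root of unity, A the q×q cyclic shift matrix and B = diag(1, ω, ..., ω^{q-1}). Then for all complex s, t, the characteristic polynomial of sA + tB is λ^q - (s^q + t^q). -/

import Mathlib

open Polynomial Finset

open Fin.NatCast in
private lemma perm_cases {n : ℕ} (σ : Equiv.Perm (Fin (n + 2)))
    (h : ∀ j, σ j = j ∨ σ j = j + 1) : σ = 1 ∨ ∀ j, σ j = j + 1 := by
  by_cases h1 : σ = 1
  · exact Or.inl h1
  · right
    obtain ⟨j0, hj0⟩ : ∃ j0, σ j0 ≠ j0 := by
      by_contra hc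
      push_neg at hc
      exact h1 (Equiv.ext hc)
    have hj0' : σ j0 = j0 + 1 := (h j0).resolve_left hj0
    have key : ∀ k : ℕ, σ (j0 + (k : Fin (n + 2))) = j0 + (k : Fin (n + 2)) + 1 := by
      intro k
      induction k with
      | zero => simpa using hj0'
      | succ k ih =>
        set m := j0 + (k : Fin (n + 2)) with hm
        have hcast : ((k + 1 : ℕ) : Fin (n + 2)) = (k : Fin (n + 2)) + 1 := by
          push_cast; ring
        rw [hcast, ← add_assoc, ← hm]
        rcases h (m + 1) with h2 | h2
        · exfalso
          have hmm : m + 1 = m := σ.injective (by rw [h2, ih])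
          have h10 : (1 : Fin (n + 2)) = 0 := by
            have : m + 1 = m + 0 := by rw [add_zero]; exact hmm
            exact add_left_cancel this
          simp at h10
        · exact h2
    intro j
    have := key ((j - j0).val)
    rwa [Fin.cast_val_eq_self, add_sub_cancel] at this

private lemma mod_succ_ne {n : ℕ} (m : ℕ) (hm : m < n + 2) : (m + 1) % (n + 2) ≠ m := by
  rcases Nat.lt_or_ge (m + 1) (n + 2) with h | h
  · rw [Nat.mod_eq_of_lt h]; omega
  · have : m + 1 = n + 2 := by omega
    rw [this, Nat.mod_self]; omega

open Polynomial in
theorem charpoly_wielandt (q : ℕ) (hq : 1 ≤ q) (ω : ℂ) (hω : IsPrimitiveRoot ω q)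
    (A B : Matrix (Fin q) (Fin q) ℂ)
    (hA : A = Matrix.of fun i j : Fin q => if (i : ℕ) = ((j : ℕ) + 1) % q then 1 else 0)
    (hB : B = Matrix.diagonal fun i : Fin q => ω ^ (i : ℕ)) (s t : ℂ) :
    (s • A + t • B).charpoly = X ^ q - C (s ^ q + t ^ q) := by
  subst hA hB
  rcases eq_or_lt_of_le hq with h1 | h2
  · -- q = 1
    have hq1 : q = 1 := h1.symm
    subst hq1
    rw [Matrix.charpoly, Matrix.det_fin_one, Matrix.charmatrix_apply_eq]
    simp [Matrix.diagonal_apply_eq]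
  · obtain ⟨n, rfl⟩ : ∃ n, q = n + 2 := ⟨q - 2, by omega⟩
    set M : Matrix (Fin (n+2)) (Fin (n+2)) ℂ :=
      s • (Matrix.of fun i j : Fin (n+2) => if (i : ℕ) = ((j : ℕ) + 1) % (n+2) then (1:ℂ) else 0) +
      t • Matrix.diagonal fun i : Fin (n+2) => ω ^ (i : ℕ) with hM
    have haddne : ∀ i : Fin (n+2), i + 1 ≠ i := by
      intro i hc
      apply mod_succ_ne (i : ℕ) i.isLt
      have := congrArg Fin.val hc
      rwa [Fin.val_add, Fin.val_one] at this
    have hMentry : ∀ i j : Fin (n+2), i ≠ j → i ≠ j + 1 → M i j = 0 := by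
      intro i j hij hij1
      have h1 : (i : ℕ) ≠ ((j : ℕ) + 1) % (n + 2) := by
        intro hc
        apply hij1
        apply Fin.ext
        rw [Fin.val_add, Fin.val_one]
        exact hc
      rw [hM]
      simp [Matrix.add_apply, Matrix.smul_apply, Matrix.of_apply, h1,
        Matrix.diagonal_apply_ne _ hij]
    have hdiag : ∀ i : Fin (n+2), M i i = t * ω ^ (i : ℕ) := by
      intro i
      have h1 : (i : ℕ) ≠ ((i : ℕ) + 1) % (n + 2) := (mod_succ_ne _ i.isLt).symm
      rw [hM]
      simp [Matrix.add_apply, Matrix.smul_apply, Matrix.of_apply, h1,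
        Matrix.diagonal_apply_eq]
    have hsub : ∀ i : Fin (n+2), M (i + 1) i = s := by
      intro i
      have h1 : ((i + 1 : Fin (n+2)) : ℕ) = ((i : ℕ) + 1) % (n + 2) := by
        rw [Fin.val_add, Fin.val_one]
      rw [hM]
      simp [Matrix.add_apply, Matrix.smul_apply, Matrix.of_apply, h1,
        Matrix.diagonal_apply_ne _ (haddne i)]
    rw [Matrix.charpoly, Matrix.det_apply]
    have hrot : ∀ i : Fin (n+2), finRotate (n+2) i = i + 1 := finRotate_succ_apply
    have hne : (1 : Equiv.Perm (Fin (n+2))) ≠ finRotate (n+2) := by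
      intro hc
      have h0 : (1 : Equiv.Perm (Fin (n+2))) 0 = finRotate (n+2) 0 := by rw [hc]
      rw [hrot, Equiv.Perm.one_apply] at h0
      exact haddne 0 h0.symm
    have hzero : ∀ σ ∈ Finset.univ, σ ∉ ({1, finRotate (n+2)} : Finset (Equiv.Perm (Fin (n+2)))) →
        Equiv.Perm.sign σ • ∏ i, (Matrix.charmatrix M) (σ i) i = 0 := by
      intro σ _ hσ
      simp only [Finset.mem_insert, Finset.mem_singleton, not_or] at hσ
      have : ¬ ∀ j, σ j = j ∨ σ j = j + 1 := by
        intro hall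
        rcases perm_cases σ hall with h | h
        · exact hσ.1 h
        · exact hσ.2 (Equiv.ext fun j => by rw [h j, hrot])
      push_neg at this
      obtain ⟨j, hj1, hj2⟩ := this
      have hentry : (Matrix.charmatrix M) (σ j) j = 0 := by
        rw [Matrix.charmatrix_apply_ne _ _ _ hj1, hMentry _ _ hj1 hj2, map_zero, neg_zero]
      have hprod : ∏ i, (Matrix.charmatrix M) (σ i) i = 0 :=
        Finset.prod_eq_zero (Finset.mem_univ j) hentry
      rw [hprod, smul_zero]
    rw [← Finset.sum_subset (Finset.subset_univ {1, finRotate (n+2)}) hzero,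
      Finset.sum_pair hne]
    have hterm1 : (Equiv.Perm.sign (1 : Equiv.Perm (Fin (n+2)))) •
        ∏ i, (Matrix.charmatrix M) ((1 : Equiv.Perm (Fin (n+2))) i) i
        = X ^ (n+2) - C (t ^ (n+2)) := by
      have hd : ∀ i : Fin (n+2), (Matrix.charmatrix M) i i = X - C (ω ^ (i:ℕ) * t) := by
        intro i
        rw [Matrix.charmatrix_apply_eq, hdiag, mul_comm]
      simp only [Equiv.Perm.one_apply, hd, map_one, one_smul]
      rw [Fin.prod_univ_eq_prod_range (fun i => X - C (ω ^ i * t)) (n+2),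
        ← X_pow_sub_C_eq_prod hω (by omega : 0 < n + 2) (rfl : t ^ (n+2) = t ^ (n+2))]
    have hterm2 : (Equiv.Perm.sign (finRotate (n+2))) •
        ∏ i, (Matrix.charmatrix M) ((finRotate (n+2)) i) i = - C (s ^ (n+2)) := by
      have hd : ∀ i : Fin (n+2), (Matrix.charmatrix M) ((finRotate (n+2)) i) i = - C s := by
        intro i
        rw [hrot, Matrix.charmatrix_apply_ne _ _ _ (haddne i), hsub]
      simp only [hd, Finset.prod_const, Finset.card_univ, Fintype.card_fin, sign_finRotate,
        one_pow, mul_one]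
      have hcs : (-C s : ℂ[X]) ^ (n + 2) = (-1) ^ (n + 2) * C (s ^ (n + 2)) := by
        rw [neg_pow, map_pow]
      rw [hcs]
      rcases Nat.even_or_odd n with he | ho
      · have h1 : Odd (n + 1) := he.add_one
        have h2 : Even (n + 2) := by rcases he with ⟨k, hk⟩; exact ⟨k + 1, by omega⟩
        rw [show n + 2 - 1 = n + 1 by omega, h1.neg_one_pow, h2.neg_one_pow]
        simp [Units.smul_def]
      · have h1 : Even (n + 1) := ho.add_one
        have h2 : Odd (n + 2) := by
          rcases ho with ⟨k, hk⟩; exact ⟨k + 1, by omega⟩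
        rw [show n + 2 - 1 = n + 1 by omega, h1.neg_one_pow, h2.neg_one_pow]
        simp [Units.smul_def]
    rw [hterm1, hterm2, map_add]
    ring
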